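/- Let v₁ be a negative solution of the Taubes equation Δv₁ = e^{v₁} - 1 + 4π Σ_{s=1}^N δ_{p_s} on ℝ² with v₁ → 0 at infinity. If f satisfies 4 s f(s) ≤ 1 + s on [0,1] and s f(s) + (1/s) f(1/s) ≥ 1 on (0,1], then v₊ = -v₁ is a supersolution of Δv = 4 e^v f(e^v) - 2 + 4π Σ δ_{q_s} - 4π Σ δ_{p_s}, i.e., away from the singular points, Δ(-v₁) ≤ 4 e^{-v₁} f(e^{-v₁}) - 2. -/

import Mathlib

/-- The flat Laplacian of a function on `ℝ²`. -/
noncomputable def lapl (φ : ℝ × ℝ → ℝ) (x : ℝ × ℝ) : ℝ :=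
  deriv (fun t => deriv (fun s => φ (s, x.2)) t) x.1 +
    deriv (fun t => deriv (fun s => φ (x.1, s)) t) x.2

/-- If `v₁ < 0` solves the Taubes equation `Δv₁ = e^{v₁} - 1` away from the
singular points `p₁,…,p_N`, and `f` satisfies (C1): `4 s f s ≤ 1 + s` on `[0,1]`
and (C2): `s f s + (1/s) f (1/s) ≥ 1` on `(0,1]`, then `v₊ = -v₁` is a
supersolution: away from the singular points,
`Δ(-v₁) ≤ 4 e^{-v₁} f(e^{-v₁}) - 2`. -/
theorem stmt11 (f : ℝ → ℝ)
    (hC1 : ∀ s ∈ Set.Icc (0 : ℝ) 1, 4 * (s * f s) ≤ 1 + s)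
    (hC2 : ∀ s ∈ Set.Ioc (0 : ℝ) 1, s * f s + (1 / s) * f (1 / s) ≥ 1)
    (N : ℕ) (p : Fin N → ℝ × ℝ) (v₁ : ℝ × ℝ → ℝ)
    (hneg : ∀ x : ℝ × ℝ, x ∉ Set.range p → v₁ x < 0)
    (hTaubes : ∀ x : ℝ × ℝ, x ∉ Set.range p →
      lapl v₁ x = Real.exp (v₁ x) - 1) :
    ∀ x : ℝ × ℝ, x ∉ Set.range p →
      lapl (fun y => -v₁ y) x ≤
        4 * Real.exp (-v₁ x) * f (Real.exp (-v₁ x)) - 2 := by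
  intro x hx
  have hlneg : lapl (fun y => -v₁ y) x = -(lapl v₁ x) := by
    simp only [lapl, deriv.fun_neg]; ring
  rw [hlneg, hTaubes x hx]
  set t := v₁ x with ht
  have htneg : t < 0 := hneg x hx
  have hs : Real.exp t ∈ Set.Ioc (0 : ℝ) 1 :=
    ⟨Real.exp_pos t, le_of_lt (Real.exp_lt_one_iff.mpr htneg)⟩
  have h2 := hC2 _ hs
  have h1 := hC1 _ ⟨le_of_lt hs.1, hs.2⟩
  rw [div_eq_mul_inv, one_mul, ← Real.exp_neg] at h2
  nlinarith [Real.exp_pos t]
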